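/- Let F = (P, Q) be a C¹ vector field on a compact neighborhood U of the horizontal segment E = {(x, b) : x ∈ [a, a+α]} ⊂ ℝ², let η > 0, n = ⌊α/η⌋, and let z₀, …, z_n ∈ U satisfy z₀ = (a, b) and z_{k+1} = z_k + η e₁ + r_k with ‖r_k‖ ≤ C η² for 0 ≤ k ≤ n−1, where e₁ = (1,0). Then there exists a constant C′ depending only on F, U, a, b, α and C (and not on η) such that | Σ_{k=0}^{n−1} ⟨F(z_k), z_{k+1} − z_k⟩ − ∫_a^{a+α} P(x, b) dx | ≤ C′ η. -/

import Mathlib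

open scoped RealInnerProductSpace

/-- The point `(x, y) ∈ ℝ²` viewed in `EuclideanSpace ℝ (Fin 2)`. -/
noncomputable def pt (x y : ℝ) : EuclideanSpace ℝ (Fin 2) :=
  (WithLp.equiv 2 (Fin 2 → ℝ)).symm ![x, y]

lemma pt_add (x y u v : ℝ) : pt x y + pt u v = pt (x + u) (y + v) := by
  ext i; fin_cases i <;> simp [pt]

lemma pt_smul (c x y : ℝ) : c • pt x y = pt (c * x) (c * y) := by
  ext i; fin_cases i <;> simp [pt]

lemma pt_sub (x y u v : ℝ) : pt x y - pt u v = pt (x - u) (y - v) := by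
  ext i; fin_cases i <;> simp [pt]

lemma norm_pt (x y : ℝ) : ‖pt x y‖ = Real.sqrt (x ^ 2 + y ^ 2) := by
  simp [pt, EuclideanSpace.norm_eq, Fin.sum_univ_two, sq_abs]

lemma norm_pt_fst (x : ℝ) : ‖pt x 0‖ = |x| := by
  rw [norm_pt]; simp [Real.sqrt_sq_eq_abs]

lemma inner_pt (v : EuclideanSpace ℝ (Fin 2)) : ⟪v, pt 1 0⟫ = v 0 := by
  rw [PiLp.inner_apply]; simp [pt, Fin.sum_univ_two]

lemma abs_apply_le (v : EuclideanSpace ℝ (Fin 2)) : |v 0| ≤ ‖v‖ := by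
  have h := abs_real_inner_le_norm v (pt 1 0)
  rwa [inner_pt, norm_pt, show (1:ℝ)^2 + 0^2 = 1 by norm_num, Real.sqrt_one, mul_one] at h

lemma sub_apply0 (v w : EuclideanSpace ℝ (Fin 2)) : (v - w) 0 = v 0 - w 0 := rfl

set_option maxHeartbeats 1000000 in
/-- horizontal-edge Riemann sum approximation: for a `C¹` vector field
`F = (P, Q)` on a compact neighborhood `U` of a horizontal segment, a discrete trajectory
performing `n = ⌊α/η⌋` steps `z_{k+1} = z_k + η e₁ + r_k` with `‖r_k‖ ≤ C η²` approximates the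
edge integral `∫_a^{a+α} P(x,b) dx` up to `O(η)`, with a constant independent of `η`. -/
theorem horizontal_edge_riemann_approx
    (U : Set (EuclideanSpace ℝ (Fin 2))) (hUcp : IsCompact U)
    (a b α C : ℝ) (hα : 0 < α) (hC : 0 < C)
    (F : EuclideanSpace ℝ (Fin 2) → EuclideanSpace ℝ (Fin 2))
    (hF : ContDiffOn ℝ 1 F U)
    (hseg : ∀ x ∈ Set.Icc a (a + α), pt x b ∈ interior U) :
    ∃ C' : ℝ, ∀ η : ℝ, 0 < η → ∀ z r : ℕ → EuclideanSpace ℝ (Fin 2),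
      z 0 = pt a b →
      (∀ k ≤ Nat.floor (α / η), z k ∈ U) →
      (∀ k < Nat.floor (α / η), z (k + 1) = z k + η • pt 1 0 + r k) →
      (∀ k < Nat.floor (α / η), ‖r k‖ ≤ C * η ^ 2) →
      |(∑ k ∈ Finset.range (Nat.floor (α / η)), ⟪F (z k), z (k + 1) - z k⟫)
          - ∫ x in a..(a + α), (F (pt x b)) 0| ≤ C' * η := by
  have hFc : ContinuousOn F U := hF.continuousOn
  obtain ⟨M₀, hM₀⟩ : ∃ M₀, ∀ x ∈ U, ‖F x‖ ≤ M₀ := hUcp.exists_bound_of_continuousOn hFc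
  set M := max M₀ 0 with hMdef
  have hM : ∀ x ∈ U, ‖F x‖ ≤ M := fun x hx => (hM₀ x hx).trans (le_max_left _ _)
  have hM0 : 0 ≤ M := le_max_right _ _
  set E : Set (EuclideanSpace ℝ (Fin 2)) := segment ℝ (pt a b) (pt (a + α) b) with hEdef
  have hptEq : ∀ θ : ℝ, pt a b + θ • (pt (a + α) b - pt a b) = pt (a + θ * α) b := by
    intro θ; rw [pt_sub, pt_smul, pt_add]; congr 1 <;> ring
  have hmemE : ∀ x ∈ Set.Icc a (a + α), pt x b ∈ E := by
    intro x hx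
    rw [hEdef, segment_eq_image']
    refine ⟨(x - a) / α, ⟨div_nonneg (by linarith [hx.1]) hα.le,
      (div_le_one hα).2 (by linarith [hx.2])⟩, ?_⟩
    show pt a b + ((x - a) / α) • (pt (a + α) b - pt a b) = pt x b
    rw [hptEq]; congr 1; field_simp; ring
  have hEsub : E ⊆ interior U := by
    rw [hEdef, segment_eq_image']
    rintro _ ⟨θ, hθ, rfl⟩
    show pt a b + θ • (pt (a + α) b - pt a b) ∈ interior U
    rw [hptEq]
    exact hseg _ ⟨by nlinarith [hθ.1, hθ.2], by nlinarith [hθ.1, hθ.2]⟩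
  have hEcp : IsCompact E := by
    rw [hEdef, segment_eq_image']
    exact isCompact_Icc.image (continuous_const.add (continuous_id.smul continuous_const))
  obtain ⟨ε, hε, hthick⟩ := hEcp.exists_thickening_subset_open isOpen_interior hEsub
  set K := Metric.cthickening (ε / 2) E with hKdef
  have hKint : K ⊆ interior U :=
    (Metric.cthickening_subset_thickening' hε (by linarith) E).trans hthick
  have hKU : K ⊆ U := hKint.trans interior_subset
  have hKconv : Convex ℝ K := (convex_segment _ _).cthickening _
  have hKcp : IsCompact K := hEcp.cthickening
  have hEK : E ⊆ K := Metric.self_subset_cthickening _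
  have hdiff : ∀ x ∈ interior U, DifferentiableAt ℝ F x := by
    intro x hx
    exact ((hF.differentiableOn one_ne_zero) x (interior_subset hx)).differentiableAt
      (mem_nhds_iff.2 ⟨interior U, interior_subset, isOpen_interior, hx⟩)
  have hfc : ContinuousOn (fderiv ℝ F) (interior U) :=
    (hF.mono interior_subset).continuousOn_fderiv_of_isOpen isOpen_interior le_rfl
  obtain ⟨L₀, hL₀⟩ := hKcp.exists_bound_of_continuousOn (hfc.mono hKint)
  set L := max L₀ 0 with hLdef
  have hL0 : 0 ≤ L := le_max_right _ _
  have hLip : ∀ x ∈ K, ∀ y ∈ K, ‖F y - F x‖ ≤ L * ‖y - x‖ := fun x hx y hy =>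
    hKconv.norm_image_sub_le_of_norm_fderiv_le (fun t ht => hdiff t (hKint ht))
      (fun t ht => (hL₀ t ht).trans (le_max_left _ _)) hx hy
  have hptb : ∀ x : ℝ, pt x b = pt 0 b + x • pt 1 0 := by
    intro x; rw [pt_smul, pt_add]; congr 1 <;> ring
  have hptc : Continuous fun x : ℝ => pt x b := by
    have he : (fun x : ℝ => pt x b) = fun x => pt 0 b + x • pt 1 0 := funext hptb
    rw [he]; exact continuous_const.add (continuous_id.smul continuous_const)
  have hgc : ContinuousOn (fun x => F (pt x b) 0) (Set.Icc a (a + α)) := by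
    have h1 : ContinuousOn (fun x => F (pt x b)) (Set.Icc a (a + α)) :=
      hFc.comp hptc.continuousOn (fun x hx => interior_subset (hseg x hx))
    exact (EuclideanSpace.proj (0 : Fin 2) : EuclideanSpace ℝ (Fin 2) →L[ℝ] ℝ).continuous.comp_continuousOn h1
  have hgb : ∀ x ∈ Set.Icc a (a + α), |F (pt x b) 0| ≤ M := fun x hx =>
    (abs_apply_le _).trans (hM _ (interior_subset (hseg x hx)))
  have hgint : IntervalIntegrable (fun x => F (pt x b) 0) MeasureTheory.volume a (a + α) :=
    ((Set.uIcc_of_le (by linarith : a ≤ a + α)) ▸ hgc).intervalIntegrable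
  set η₀ := ε / (2 * α * C) with hη₀def
  have hη₀ : 0 < η₀ := by positivity
  refine ⟨max (2 * M * α / η₀ + M * C * α) (M * C * α + L * C * α ^ 2 + L * α + M), ?_⟩
  intro η hη z r hz0 hzU hstep hr
  set n := Nat.floor (α / η) with hndef
  have hnη : (n : ℝ) * η ≤ α := by
    have := Nat.floor_le (by positivity : (0:ℝ) ≤ α / η)
    calc (n : ℝ) * η ≤ (α / η) * η := by nlinarith
    _ = α := by field_simp
  have hαn : α < ((n : ℝ) + 1) * η := by
    have := Nat.lt_floor_add_one (α / η)
    calc α = (α / η) * η := by field_simp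
    _ < ((n:ℝ) + 1) * η := by nlinarith
  have hkη : ∀ k : ℕ, k ≤ n → (k : ℝ) * η ≤ α := by
    intro k hk
    calc (k : ℝ) * η ≤ (n : ℝ) * η := by
          have : (k:ℝ) ≤ n := Nat.cast_le.2 hk
          nlinarith
    _ ≤ α := hnη
  -- the points on the segment
  set w : ℕ → EuclideanSpace ℝ (Fin 2) := fun k => pt (a + k * η) b with hwdef
  have hwE : ∀ k ≤ n, w k ∈ E := by
    intro k hk
    exact hmemE _ ⟨le_add_of_nonneg_right (by positivity), by linarith [hkη k hk]⟩
  have hw0 : w 0 = pt a b := by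
    show pt (a + (0:ℕ) * η) b = pt a b
    norm_num
  have hwstep : ∀ k : ℕ, w (k + 1) = w k + η • pt 1 0 := by
    intro k
    show pt (a + ((k:ℕ)+1 : ℕ) * η) b = pt (a + k * η) b + η • pt 1 0
    rw [pt_smul, pt_add]
    congr 1 <;> push_cast <;> ring
  have hzw : ∀ k ≤ n, ‖z k - w k‖ ≤ k * C * η ^ 2 := by
    intro k
    induction k with
    | zero => intro _; rw [hz0, ← hw0]; simp
    | succ k ih =>
      intro hk
      have hk' : k < n := Nat.lt_of_succ_le hk
      have h1 : z (k + 1) - w (k + 1) = (z k - w k) + r k := by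
        rw [hstep k hk', hwstep k]; abel
      rw [h1]
      calc ‖(z k - w k) + r k‖ ≤ ‖z k - w k‖ + ‖r k‖ := norm_add_le _ _
      _ ≤ k * C * η ^ 2 + C * η ^ 2 := add_le_add (ih hk'.le) (hr k hk')
      _ = ((k : ℕ) + 1 : ℕ) * C * η ^ 2 := by push_cast; ring
  have hzw' : ∀ k ≤ n, ‖z k - w k‖ ≤ α * C * η := by
    intro k hk
    refine (hzw k hk).trans ?_
    have h2 := hkη k hk
    nlinarith [mul_nonneg (mul_nonneg (sub_nonneg.2 h2) hC.le) hη.le]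
  rcases le_or_gt η η₀ with hsm | hbg
  · -- small step size: main estimate
    have hzK : ∀ k ≤ n, z k ∈ K := by
      intro k hk
      refine Metric.mem_cthickening_of_dist_le (z k) (w k) _ _ (hwE k hk) ?_
      rw [dist_eq_norm]
      refine (hzw' k hk).trans ?_
      have h3 : α * C * η ≤ α * C * η₀ := by
        nlinarith [mul_nonneg (mul_pos hα hC).le (sub_nonneg.2 hsm)]
      refine h3.trans (le_of_eq ?_)
      rw [hη₀def]; field_simp
    set S := ∑ k ∈ Finset.range n, ⟪F (z k), z (k + 1) - z k⟫ with hSdef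
    set T := ∑ k ∈ Finset.range n, η * (F (w k) 0) with hTdef
    set I := ∫ x in a..(a + α), (F (pt x b)) 0 with hIdef
    have hST : |S - T| ≤ (L * C * α ^ 2 + M * C * α) * η := by
      rw [hSdef, hTdef, ← Finset.sum_sub_distrib]
      refine (Finset.abs_sum_le_sum_abs _ _).trans ?_
      have hbound : ∀ k ∈ Finset.range n,
          |⟪F (z k), z (k + 1) - z k⟫ - η * (F (w k) 0)| ≤ (L * α * C + M * C) * η ^ 2 := by
        intro k hk
        rw [Finset.mem_range] at hk
        have h1 : z (k + 1) - z k = η • pt 1 0 + r k := by rw [hstep k hk]; abel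
        have h2 : ⟪F (z k), z (k + 1) - z k⟫ = η * (F (z k) 0) + ⟪F (z k), r k⟫ := by
          rw [h1, inner_add_right, real_inner_smul_right, inner_pt]
        rw [h2]
        have e1 : |F (z k) 0 - F (w k) 0| ≤ L * (α * C * η) := by
          have hl := hLip (w k) (hEK (hwE k hk.le)) (z k) (hzK k hk.le)
          have h3 : |(F (z k) - F (w k)) 0| ≤ ‖F (z k) - F (w k)‖ := abs_apply_le _
          rw [sub_apply0] at h3
          calc |F (z k) 0 - F (w k) 0| ≤ ‖F (z k) - F (w k)‖ := h3
          _ ≤ L * ‖z k - w k‖ := hl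
          _ ≤ L * (α * C * η) := by nlinarith [hzw' k hk.le, norm_nonneg (z k - w k)]
        have e2 : |⟪F (z k), r k⟫| ≤ M * (C * η ^ 2) := by
          refine (abs_real_inner_le_norm _ _).trans ?_
          have hm := hM (z k) (hzU k hk.le)
          nlinarith [hr k hk, norm_nonneg (F (z k)), norm_nonneg (r k)]
        calc |η * F (z k) 0 + ⟪F (z k), r k⟫ - η * F (w k) 0|
            = |η * (F (z k) 0 - F (w k) 0) + ⟪F (z k), r k⟫| := by congr 1; ring
        _ ≤ |η * (F (z k) 0 - F (w k) 0)| + |⟪F (z k), r k⟫| := abs_add_le _ _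
        _ ≤ η * (L * (α * C * η)) + M * (C * η ^ 2) := by
            rw [abs_mul, abs_of_pos hη]
            exact add_le_add (mul_le_mul_of_nonneg_left e1 hη.le) e2
        _ = (L * α * C + M * C) * η ^ 2 := by ring
      refine (Finset.sum_le_sum hbound).trans ?_
      rw [Finset.sum_const, Finset.card_range, nsmul_eq_mul]
      calc (n : ℝ) * ((L * α * C + M * C) * η ^ 2)
          = ((n : ℝ) * η) * ((L * α * C + M * C) * η) := by ring
      _ ≤ α * ((L * α * C + M * C) * η) := by
          refine mul_le_mul_of_nonneg_right hnη (by positivity)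
      _ = (L * C * α ^ 2 + M * C * α) * η := by ring
    have hTI : |T - I| ≤ (L * α + M) * η := by
      set ak : ℕ → ℝ := fun k => a + k * η with hakdef
      have hak : ∀ k : ℕ, ak k = a + k * η := fun k => rfl
      have hak0 : ak 0 = a := by rw [hak]; norm_num
      have hICC : Set.uIcc a (a + α) = Set.Icc a (a + α) :=
        Set.uIcc_of_le (by linarith : a ≤ a + α)
      have hakmem : ∀ k ≤ n, ak k ∈ Set.Icc a (a + α) := by
        intro k hk
        rw [hak]
        exact ⟨le_add_of_nonneg_right (by positivity), by linarith [hkη k hk]⟩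
      have hamem : a ∈ Set.Icc a (a + α) := Set.left_mem_Icc.2 (by linarith)
      have haamem : a + α ∈ Set.Icc a (a + α) := Set.right_mem_Icc.2 (by linarith)
      have hint : ∀ k, k < n → IntervalIntegrable (fun x => F (pt x b) 0)
          MeasureTheory.volume (ak k) (ak (k + 1)) := by
        intro k hk
        refine hgint.mono_set (Set.uIcc_subset_uIcc ?_ ?_) <;> rw [hICC]
        exacts [hakmem k hk.le, hakmem (k + 1) hk]
      have hintn : IntervalIntegrable (fun x => F (pt x b) 0)
          MeasureTheory.volume a (ak n) := by
        refine hgint.mono_set (Set.uIcc_subset_uIcc ?_ ?_) <;> rw [hICC]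
        exacts [hamem, hakmem n le_rfl]
      have hinttail : IntervalIntegrable (fun x => F (pt x b) 0)
          MeasureTheory.volume (ak n) (a + α) := by
        refine hgint.mono_set (Set.uIcc_subset_uIcc ?_ ?_) <;> rw [hICC]
        exacts [hakmem n le_rfl, haamem]
      have hsumint : ∑ k ∈ Finset.range n,
          (∫ x in (ak k)..(ak (k + 1)), F (pt x b) 0) = ∫ x in (ak 0)..(ak n), F (pt x b) 0 :=
        intervalIntegral.sum_integral_adjacent_intervals hint
      have hsplit : (∫ x in a..ak n, F (pt x b) 0) + (∫ x in ak n..(a + α), F (pt x b) 0) = I := by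
        rw [hIdef]
        exact intervalIntegral.integral_add_adjacent_intervals hintn hinttail
      have hTmain : |T - ∫ x in a..ak n, F (pt x b) 0| ≤ L * α * η := by
        rw [← hak0, ← hsumint, hTdef, ← Finset.sum_sub_distrib]
        refine (Finset.abs_sum_le_sum_abs _ _).trans ?_
        have hbound : ∀ k ∈ Finset.range n,
            |η * (F (w k) 0) - ∫ x in (ak k)..(ak (k + 1)), F (pt x b) 0| ≤ L * η ^ 2 := by
          intro k hk
          rw [Finset.mem_range] at hk
          have hconst : η * (F (w k) 0) = ∫ _x in (ak k)..(ak (k + 1)), F (w k) 0 := by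
            rw [intervalIntegral.integral_const, smul_eq_mul]
            congr 1
            rw [hak, hak]; push_cast; ring
          rw [hconst, ← intervalIntegral.integral_sub (intervalIntegrable_const) (hint k hk)]
          have hle : ∀ x ∈ Set.uIoc (ak k) (ak (k + 1)), ‖F (w k) 0 - F (pt x b) 0‖ ≤ L * η := by
            intro x hx
            rw [Set.uIoc_of_le (by rw [hak, hak]; push_cast; nlinarith [hη.le] :
              ak k ≤ ak (k + 1))] at hx
            have hx1 : x ∈ Set.Icc a (a + α) := by
              constructor
              · linarith [(hakmem k hk.le).1, hx.1.le]
              · linarith [(hakmem (k + 1) hk).2, hx.2]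
            have hxK : pt x b ∈ K := hEK (hmemE x hx1)
            have hwK : w k ∈ K := hEK (hwE k hk.le)
            have hl := hLip (pt x b) hxK (w k) hwK
            have h3 : |(F (w k) - F (pt x b)) 0| ≤ ‖F (w k) - F (pt x b)‖ := abs_apply_le _
            rw [sub_apply0] at h3
            have h4 : ‖w k - pt x b‖ ≤ η := by
              show ‖pt (a + k * η) b - pt x b‖ ≤ η
              rw [pt_sub, sub_self, norm_pt_fst]
              rw [abs_le]
              constructor
              · have h6 := hx.2
                rw [hak] at h6
                push_cast at h6
                linarith
              · have h6 := hx.1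
                rw [hak] at h6
                linarith
            calc ‖F (w k) 0 - F (pt x b) 0‖ = |F (w k) 0 - F (pt x b) 0| := rfl
            _ ≤ ‖F (w k) - F (pt x b)‖ := h3
            _ ≤ L * ‖w k - pt x b‖ := hl
            _ ≤ L * η := by nlinarith [norm_nonneg (w k - pt x b)]
          have hni := intervalIntegral.norm_integral_le_of_norm_le_const hle
          have h5 : |ak (k + 1) - ak k| = η := by
            rw [hak, hak]; push_cast
            rw [show a + ((k:ℝ) + 1) * η - (a + (k:ℝ) * η) = η by ring, abs_of_pos hη]
          calc |∫ x in (ak k)..(ak (k + 1)), (F (w k) 0 - F (pt x b) 0)|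
              ≤ L * η * |ak (k + 1) - ak k| := hni
          _ = L * η ^ 2 := by rw [h5]; ring
        refine (Finset.sum_le_sum hbound).trans ?_
        rw [Finset.sum_const, Finset.card_range, nsmul_eq_mul]
        calc (n : ℝ) * (L * η ^ 2) = ((n : ℝ) * η) * (L * η) := by ring
        _ ≤ α * (L * η) := mul_le_mul_of_nonneg_right hnη (by positivity)
        _ = L * α * η := by ring
      have hTtail : |∫ x in ak n..(a + α), F (pt x b) 0| ≤ M * η := by
        have hle : ∀ x ∈ Set.uIoc (ak n) (a + α), ‖F (pt x b) 0‖ ≤ M := by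
          intro x hx
          rw [Set.uIoc_of_le (by rw [hak]; linarith [hkη n le_rfl] : ak n ≤ a + α)] at hx
          refine hgb x ⟨?_, hx.2⟩
          linarith [(hakmem n le_rfl).1, hx.1.le]
        have hni := intervalIntegral.norm_integral_le_of_norm_le_const hle
        have h5 : |a + α - ak n| ≤ η := by
          rw [hak]
          rw [abs_of_nonneg (by linarith [hkη n le_rfl])]
          linarith [hαn]
        calc |∫ x in ak n..(a + α), F (pt x b) 0| ≤ M * |a + α - ak n| := hni
        _ ≤ M * η := by nlinarith
      calc |T - I| = |(T - ∫ x in a..ak n, F (pt x b) 0)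
            - (∫ x in ak n..(a + α), F (pt x b) 0)| := by rw [← hsplit]; congr 1; ring
      _ ≤ |T - ∫ x in a..ak n, F (pt x b) 0| + |∫ x in ak n..(a + α), F (pt x b) 0| :=
          abs_sub _ _
      _ ≤ L * α * η + M * η := add_le_add hTmain hTtail
      _ = (L * α + M) * η := by ring
    calc |S - I| = |(S - T) + (T - I)| := by congr 1; ring
    _ ≤ |S - T| + |T - I| := abs_add_le _ _
    _ ≤ (L * C * α ^ 2 + M * C * α) * η + (L * α + M) * η := add_le_add hST hTI
    _ = (M * C * α + L * C * α ^ 2 + L * α + M) * η := by ring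
    _ ≤ max (2 * M * α / η₀ + M * C * α) (M * C * α + L * C * α ^ 2 + L * α + M) * η :=
        mul_le_mul_of_nonneg_right (le_max_right _ _) hη.le
  · -- large step size: crude estimate
    have hS : |∑ k ∈ Finset.range n, ⟪F (z k), z (k + 1) - z k⟫| ≤ M * α + M * C * α * η := by
      refine (Finset.abs_sum_le_sum_abs _ _).trans ?_
      have hbound : ∀ k ∈ Finset.range n,
          |⟪F (z k), z (k + 1) - z k⟫| ≤ M * (η + C * η ^ 2) := by
        intro k hk
        rw [Finset.mem_range] at hk
        refine (abs_real_inner_le_norm _ _).trans ?_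
        have h1 : z (k + 1) - z k = η • pt 1 0 + r k := by rw [hstep k hk]; abel
        have h2 : ‖z (k + 1) - z k‖ ≤ η + C * η ^ 2 := by
          rw [h1]
          refine (norm_add_le _ _).trans ?_
          have h3 : ‖η • pt 1 0‖ = η := by
            rw [norm_smul, norm_pt_fst, abs_one, mul_one, Real.norm_eq_abs, abs_of_pos hη]
          rw [h3]
          exact add_le_add_right (hr k hk) _
        have hm := hM (z k) (hzU k hk.le)
        nlinarith [norm_nonneg (F (z k)), norm_nonneg (z (k + 1) - z k)]
      refine (Finset.sum_le_sum hbound).trans ?_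
      rw [Finset.sum_const, Finset.card_range, nsmul_eq_mul]
      have h4 : (n : ℝ) * η ≤ α := hnη
      calc (n : ℝ) * (M * (η + C * η ^ 2))
          = M * ((n : ℝ) * η) + M * C * η * ((n : ℝ) * η) := by ring
      _ ≤ M * α + M * C * η * α :=
          add_le_add (mul_le_mul_of_nonneg_left h4 hM0)
            (mul_le_mul_of_nonneg_left h4 (by positivity))
      _ = M * α + M * C * α * η := by ring
    have hI : |∫ x in a..(a + α), F (pt x b) 0| ≤ M * α := by
      have hle : ∀ x ∈ Set.uIoc a (a + α), ‖F (pt x b) 0‖ ≤ M := by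
        intro x hx
        rw [Set.uIoc_of_le (by linarith : a ≤ a + α)] at hx
        exact hgb x ⟨hx.1.le, hx.2⟩
      have hni := intervalIntegral.norm_integral_le_of_norm_le_const hle
      calc |∫ x in a..(a + α), F (pt x b) 0| ≤ M * |a + α - a| := hni
      _ = M * α := by rw [show a + α - a = α by ring, abs_of_pos hα]
    have h2Mα : 2 * M * α ≤ (2 * M * α / η₀) * η := by
      rw [div_mul_eq_mul_div, le_div_iff₀ hη₀]
      nlinarith [mul_nonneg (mul_nonneg hM0 hα.le) (sub_nonneg.2 hbg.le)]
    calc |(∑ k ∈ Finset.range n, ⟪F (z k), z (k + 1) - z k⟫)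
          - ∫ x in a..(a + α), F (pt x b) 0|
        ≤ |∑ k ∈ Finset.range n, ⟪F (z k), z (k + 1) - z k⟫|
          + |∫ x in a..(a + α), F (pt x b) 0| := abs_sub _ _
    _ ≤ (M * α + M * C * α * η) + M * α := add_le_add hS hI
    _ = 2 * M * α + M * C * α * η := by ring
    _ ≤ (2 * M * α / η₀) * η + M * C * α * η := by linarith
    _ = (2 * M * α / η₀ + M * C * α) * η := by ring
    _ ≤ max (2 * M * α / η₀ + M * C * α) (M * C * α + L * C * α ^ 2 + L * α + M) * η :=
        mul_le_mul_of_nonneg_right (le_max_left _ _) hη.le
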